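/- Consider one iteration of the simplified algorithm of Section 5 for F(u,v) = G(u) − v: μ^{k+1} = (I + δ∂J*)⁻¹(μᵏ + δG(uᵏ)), μ̄^{k+1} = 2μ^{k+1} − μᵏ, u^{k+1} = (I + τ∂H)⁻¹(uᵏ − τ∇G(uᵏ)*μ̄^{k+1}). Then (μ^{k+1}, u^{k+1}) satisfies the implicit inclusion 0 ∈ N(μ^{k+1}, u^{k+1}) + Lᵏ(μ^{k+1} − μᵏ, u^{k+1} − uᵏ), where N(μ, u) = (∂J*(μ) − ∇G(uᵏ)u − cᵏ, ∂H(u) + ∇G(uᵏ)*μ), cᵏ = G(uᵏ) − ∇G(uᵏ)uᵏ, and Lᵏ = [[δ⁻¹I, ∇G(uᵏ)], [∇G(uᵏ)*, τ⁻¹I]]. -/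

import Mathlib

open scoped RealInnerProductSpace

/-- A function to `EReal` is proper if it never takes the value `⊥` and is somewhere
finite. -/
def EProper {H : Type*} (f : H → EReal) : Prop :=
  (∀ x, f x ≠ ⊥) ∧ ∃ x, f x ≠ ⊤

/-- Convexity for extended-real-valued functions. -/
def EConvexOn {H : Type*} [AddCommGroup H] [Module ℝ H] (f : H → EReal) : Prop :=
  ∀ x y : H, ∀ a b : ℝ, 0 ≤ a → 0 ≤ b → a + b = 1 →
    f (a • x + b • y) ≤ (a : EReal) * f x + (b : EReal) * f y

/-- The convex subdifferential of `f : H → EReal` at `x`. -/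
def ESubdiff {H : Type*} [NormedAddCommGroup H] [InnerProductSpace ℝ H]
    (f : H → EReal) (x : H) : Set H :=
  {g | ∀ y, f x + ((⟪g, y - x⟫ : ℝ) : EReal) ≤ f y}

/-- `u` is a proximal point of `f` with parameter `α` at `w`, i.e. a minimiser of
`v ↦ (1/2)‖v − w‖² + α f(v)`; single-valuedness makes this the resolvent
`(I + α ∂f)⁻¹(w)`. -/
def IsProxPt {H : Type*} [NormedAddCommGroup H] [InnerProductSpace ℝ H]
    (f : H → EReal) (α : ℝ) (w u : H) : Prop :=
  ∀ v : H, ((1 / 2 * ‖u - w‖ ^ 2 : ℝ) : EReal) + (α : EReal) * f u ≤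
    ((1 / 2 * ‖v - w‖ ^ 2 : ℝ) : EReal) + (α : EReal) * f v

/-- The convex (Fenchel) conjugate of `f : H → EReal`. -/
noncomputable def EConj {H : Type*} [NormedAddCommGroup H] [InnerProductSpace ℝ H]
    (f : H → EReal) (μ : H) : EReal :=
  ⨆ v : H, ((⟪μ, v⟫ : ℝ) : EReal) - f v

lemma econj_ne_bot {H : Type*} [NormedAddCommGroup H] [InnerProductSpace ℝ H]
    {f : H → EReal} (hbot : ∀ x, f x ≠ ⊥) (hfin : ∃ x, f x ≠ ⊤) (μ : H) :
    EConj f μ ≠ ⊥ := by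
  obtain ⟨x, hx⟩ := hfin
  lift f x to ℝ using ⟨hx, hbot x⟩ with r hr
  have h1 : ((⟪μ, x⟫ : ℝ) : EReal) - f x ≤ EConj f μ := le_iSup (fun v : H => ((⟪μ, v⟫ : ℝ) : EReal) - f v) x
  rw [← hr] at h1
  intro hc
  rw [hc] at h1
  rw [← EReal.coe_sub] at h1
  exact (EReal.coe_ne_bot _) (le_bot_iff.1 h1)

lemma econj_convex {H : Type*} [NormedAddCommGroup H] [InnerProductSpace ℝ H]
    {f : H → EReal} (hbot : ∀ x, f x ≠ ⊥) : EConvexOn (EConj f) := by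
  intro x y a b ha hb hab
  refine iSup_le fun v => ?_
  have hx : ((⟪x, v⟫ : ℝ) : EReal) - f v ≤ EConj f x := le_iSup (fun v : H => ((⟪x, v⟫ : ℝ) : EReal) - f v) v
  have hy : ((⟪y, v⟫ : ℝ) : EReal) - f v ≤ EConj f y := le_iSup (fun v : H => ((⟪y, v⟫ : ℝ) : EReal) - f v) v
  by_cases hfv : f v = ⊤
  · rw [hfv]
    simp
  · lift f v to ℝ using ⟨hfv, hbot v⟩ with r hr
    rw [← EReal.coe_sub] at hx hy ⊢
    have key : (⟪a • x + b • y, v⟫ : ℝ) - r = a * (⟪x, v⟫ - r) + b * (⟪y, v⟫ - r) := by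
      rw [inner_add_left, real_inner_smul_left, real_inner_smul_left]; linear_combination r * hab
    rw [key, EReal.coe_add, EReal.coe_mul, EReal.coe_mul]
    exact add_le_add
      (mul_le_mul_of_nonneg_left hx (by exact_mod_cast ha))
      (mul_le_mul_of_nonneg_left hy (by exact_mod_cast hb))

lemma prox_mem_subdiff {H : Type*} [NormedAddCommGroup H] [InnerProductSpace ℝ H]
    {f : H → EReal} (hbot : ∀ x, f x ≠ ⊥) (hconv : EConvexOn f)
    {α : ℝ} (hα : 0 < α) {w u : H} (h : IsProxPt f α w u) :
    α⁻¹ • (w - u) ∈ ESubdiff f u := by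
  intro y
  by_cases hfy : f y = ⊤
  · rw [hfy]; exact le_top
  lift f y to ℝ using ⟨hfy, hbot y⟩ with fy hfy'
  by_cases hfu : f u = ⊤
  · -- contradiction with prox inequality at y
    exfalso
    have hy := h y
    rw [hfu] at hy
    rw [EReal.coe_mul_top_of_pos hα, EReal.coe_add_top, ← hfy', ← EReal.coe_mul,
      ← EReal.coe_add, top_le_iff] at hy
    exact (EReal.coe_ne_top _) hy
  lift f u to ℝ using ⟨hfu, hbot u⟩ with fu hfu'
  rw [← EReal.coe_add, EReal.coe_le_coe_iff]
  -- key step inequality for t ∈ (0,1)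
  have key : ∀ t : ℝ, t ∈ Set.Ioo (0:ℝ) 1 →
      α * (fu - fy) ≤ ⟪u - w, y - u⟫ + t / 2 * ‖y - u‖ ^ 2 := by
    intro t ht
    obtain ⟨ht0, ht1⟩ := ht
    have hconv' := hconv u y (1 - t) t (by linarith) ht0.le (by ring)
    rw [← hfu', ← hfy', ← EReal.coe_mul, ← EReal.coe_mul, ← EReal.coe_add] at hconv'
    have hvt : (1 - t) • u + t • y = u + t • (y - u) := by
      rw [smul_sub, sub_smul, one_smul]; abel
    rw [hvt] at hconv'
    have hprox := h (u + t • (y - u))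
    rw [← hfu'] at hprox
    have hchain : ((1 / 2 * ‖u - w‖ ^ 2 : ℝ) : EReal) + (α : EReal) * (fu : EReal) ≤
        ((1 / 2 * ‖u + t • (y - u) - w‖ ^ 2 : ℝ) : EReal) +
          (α : EReal) * (((1 - t) * fu + t * fy : ℝ) : EReal) :=
      le_trans hprox (add_le_add_right
        (mul_le_mul_of_nonneg_left hconv' (by exact_mod_cast hα.le : (0:EReal) ≤ (α:EReal))) _)
    rw [← EReal.coe_mul, ← EReal.coe_mul, ← EReal.coe_add, ← EReal.coe_add,
      EReal.coe_le_coe_iff] at hchain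
    have hnorm : ‖u + t • (y - u) - w‖ ^ 2 =
        ‖u - w‖ ^ 2 + 2 * (t * ⟪u - w, y - u⟫) + t ^ 2 * ‖y - u‖ ^ 2 := by
      have : u + t • (y - u) - w = (u - w) + t • (y - u) := by abel
      rw [this, norm_add_sq_real, real_inner_smul_right, norm_smul]
      simp [mul_pow, abs_of_pos ht0]
    rw [hnorm] at hchain
    -- hchain : 1/2‖u-w‖² + α fu ≤ 1/2(‖u-w‖² + 2t⟪⟫ + t²‖‖²) + α((1-t)fu + t fy)
    nlinarith [hchain, ht0, sq_nonneg t]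
  -- take the limit t → 0⁺
  have hlim : Filter.Tendsto (fun t : ℝ => ⟪u - w, y - u⟫ + t / 2 * ‖y - u‖ ^ 2)
      (nhdsWithin 0 (Set.Ioi 0)) (nhds (⟪u - w, y - u⟫ + 0 / 2 * ‖y - u‖ ^ 2)) := by
    apply Filter.Tendsto.mono_left _ nhdsWithin_le_nhds
    exact (tendsto_const_nhds.add (((continuous_id.div_const 2).mul
      continuous_const).tendsto 0))
  have hev : ∀ᶠ t in nhdsWithin (0:ℝ) (Set.Ioi 0),
      α * (fu - fy) ≤ ⟪u - w, y - u⟫ + t / 2 * ‖y - u‖ ^ 2 :=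
    Filter.eventually_of_mem (Ioo_mem_nhdsGT_of_mem (by constructor <;> norm_num)) key
  have hfinal : α * (fu - fy) ≤ ⟪u - w, y - u⟫ + 0 / 2 * ‖y - u‖ ^ 2 :=
    ge_of_tendsto hlim hev
  rw [zero_div, zero_mul, add_zero] at hfinal
  -- conclude
  have hinner : ⟪α⁻¹ • (w - u), y - u⟫ = α⁻¹ * ⟪w - u, y - u⟫ := real_inner_smul_left _ _ _
  have hflip : (⟪w - u, y - u⟫ : ℝ) = - ⟪u - w, y - u⟫ := by
    rw [← inner_neg_left]; congr 1; abel
  rw [hinner, hflip]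
  have hαinv : 0 < α⁻¹ := inv_pos.2 hα
  have h2 : fu - fy ≤ α⁻¹ * ⟪u - w, y - u⟫ := by
    have h3 := mul_le_mul_of_nonneg_left hfinal hαinv.le
    rwa [← mul_assoc, inv_mul_cancel₀ hα.ne', one_mul] at h3
  linarith

/-- one iteration of the simplified algorithm of Section 5,
`μ^{k+1} = (I + δ∂J*)⁻¹(μᵏ + δG(uᵏ))`, `μ̄^{k+1} = 2μ^{k+1} − μᵏ`,
`u^{k+1} = (I + τ∂H)⁻¹(uᵏ − τ∇G(uᵏ)*μ̄^{k+1})`, satisfies the implicit inclusion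
`0 ∈ N(μ^{k+1}, u^{k+1}) + Lᵏ(μ^{k+1} − μᵏ, u^{k+1} − uᵏ)` where
`N(μ, u) = (∂J*(μ) − ∇G(uᵏ)u − cᵏ, ∂H(u) + ∇G(uᵏ)*μ)`, `cᵏ = G(uᵏ) − ∇G(uᵏ)uᵏ`, and
`Lᵏ = [[δ⁻¹I, ∇G(uᵏ)], [∇G(uᵏ)*, τ⁻¹I]]`. -/
theorem simplified_iteration_solves_preconditioned_inclusion
    {U V : Type*} [NormedAddCommGroup U] [InnerProductSpace ℝ U] [CompleteSpace U]
    [NormedAddCommGroup V] [InnerProductSpace ℝ V] [CompleteSpace V]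
    (Hf : U → EReal) (J : V → EReal)
    (hHprop : EProper Hf) (hHconv : EConvexOn Hf) (hHlsc : LowerSemicontinuous Hf)
    (hJprop : EProper J) (hJconv : EConvexOn J) (hJlsc : LowerSemicontinuous J)
    (G : U → V) (uk : U) (K : U →L[ℝ] V) (hK : HasFDerivAt G K uk)
    (δ τ : ℝ) (hδ : 0 < δ) (hτ : 0 < τ)
    (muk mu1 : V) (u1 : U)
    (hmu1 : IsProxPt (EConj J) δ (muk + δ • G uk) mu1)
    (hu1 : IsProxPt Hf τ (uk - τ • K.adjoint (2 • mu1 - muk)) u1) :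
    ∃ p ∈ ESubdiff (EConj J) mu1, ∃ q ∈ ESubdiff Hf u1,
      (p - K u1 - (G uk - K uk)) + (δ⁻¹ • (mu1 - muk) + K (u1 - uk)) = 0 ∧
      (q + K.adjoint mu1) + (K.adjoint (mu1 - muk) + τ⁻¹ • (u1 - uk)) = 0 := by
  refine ⟨δ⁻¹ • ((muk + δ • G uk) - mu1),
    prox_mem_subdiff (econj_ne_bot hJprop.1 hJprop.2) (econj_convex hJprop.1) hδ hmu1,
    τ⁻¹ • ((uk - τ • K.adjoint (2 • mu1 - muk)) - u1),
    prox_mem_subdiff hHprop.1 hHconv hτ hu1, ?_, ?_⟩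
  · simp only [map_sub, smul_sub, smul_add, smul_smul, inv_mul_cancel₀ hδ.ne', one_smul]
    abel
  · simp only [map_sub, map_nsmul, smul_sub, smul_add, smul_smul,
      inv_mul_cancel₀ hτ.ne', one_smul]
    abel
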